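/- Let k be a positive integer and a_1,...,a_k, b_1,...,b_k non-negative integers with a_1 ≥ 1 and a_i + b_i ≥ 1 for all i. If there exist indices i < j in [k] with a_i ≥ 2 and b_j ≥ 1, then R_{<N}(a_1,...,a_k; b_1,...,b_k) = O(N^{−1} log^k N) as N → ∞. -/
import Mathlib


open Finset

/-- `R_{<N}(a₁,…,a_k; b₁,…,b_k) = Σ_{0<n₁<⋯<n_k<N} Π_i 1/((N-n_i)^{a_i} n_i^{b_i})`. -/
noncomputable def Rsum (N k : ℕ) (a b : Fin k → ℕ) : ℝ :=
  ∑ n ∈ Finset.univ.filter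
      (fun n : Fin k → Fin N => (∀ i, 0 < (n i : ℕ)) ∧ StrictMono n),
    ∏ i, 1 / (((N : ℝ) - n i) ^ a i * (n i : ℝ) ^ b i)

lemma pow_bound {x y : ℝ} (hx : 1 ≤ x) (hy : 1 ≤ y) {p q p' q' : ℕ} (hp : p' ≤ p) (hq : q' ≤ q) :
    1/(x^p * y^q) ≤ 1/(x^p' * y^q') := by
  apply one_div_le_one_div_of_le (by positivity)
  exact mul_le_mul (pow_le_pow_right₀ hx hp) (pow_le_pow_right₀ hy hq) (by positivity) (by positivity)

lemma harm_sum_le (N : ℕ) (hN : 2 ≤ N) :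
    ∑ j ∈ Finset.range N, 1 / ((j:ℝ) + 1) ≤ 3 * Real.log N := by
  have h1 : ∑ j ∈ Finset.range N, 1 / ((j:ℝ) + 1) = (harmonic N : ℝ) := by
    rw [harmonic]
    push_cast
    simp [one_div]
  rw [h1]
  have h2 := harmonic_le_one_add_log N
  have hlog : (1:ℝ)/2 ≤ Real.log N := by
    have h3 : Real.log 2 ≤ Real.log N := Real.log_le_log (by norm_num) (by exact_mod_cast hN)
    nlinarith [Real.log_two_gt_d9]
  linarith

lemma sumA (N : ℕ) (hN : 2 ≤ N) : ∑ m : Fin N, 1/((N:ℝ) - m) ≤ 3 * Real.log N := by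
  rw [Fin.sum_univ_eq_sum_range (fun m : ℕ => 1/((N:ℝ) - m)) N]
  rw [← Finset.sum_range_reflect]
  have : ∀ j ∈ Finset.range N, 1/((N:ℝ) - ((N - 1 - j : ℕ):ℝ)) = 1/((j:ℝ)+1) := by
    intro j hj
    rw [Finset.mem_range] at hj
    have h1 : ((N - 1 - j : ℕ):ℝ) = (N:ℝ) - 1 - j := by
      have h2 : N - 1 - j + (j + 1) = N := by omega
      have := congrArg (fun t : ℕ => (t:ℝ)) h2
      push_cast at this
      linarith
    rw [h1]
    ring_nf
  rw [Finset.sum_congr rfl this]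
  exact harm_sum_le N hN

lemma sumB (N : ℕ) (hN : 2 ≤ N) : ∑ m : Fin N, 1/((m:ℝ)) ≤ 3 * Real.log N := by
  rw [Fin.sum_univ_eq_sum_range (fun m : ℕ => 1/(m:ℝ)) N]
  refine le_trans ?_ (harm_sum_le N hN)
  obtain ⟨M, rfl⟩ : ∃ M, N = M + 1 := ⟨N-1, by omega⟩
  rw [Finset.sum_range_succ' (fun j : ℕ => 1/((j:ℝ))) M,
      Finset.sum_range_succ (fun j : ℕ => 1/((j:ℝ)+1)) M]
  have hA : ∀ i ∈ Finset.range M, 1/(((i+1:ℕ)):ℝ) = 1/((i:ℝ)+1) := by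
    intro i _; push_cast; ring
  rw [Finset.sum_congr rfl hA]
  have h1 : (0:ℝ) ≤ 1/((M:ℝ)+1) := by positivity
  have h0 : 1/((0:ℕ):ℝ) = 0 := by norm_num
  rw [h0]
  linarith

/-- Lemma (iii): if there are `i < j` with `a_i ≥ 2` and `b_j ≥ 1`,
then `R_{<N} = O(N⁻¹ log^k N)` as `N → ∞`. -/
theorem stmt_3 (k : ℕ) (hk : 0 < k) (a b : Fin k → ℕ)
    (ha1 : 1 ≤ a ⟨0, hk⟩) (hab : ∀ i, 1 ≤ a i + b i)
    (h : ∃ i j : Fin k, i < j ∧ 2 ≤ a i ∧ 1 ≤ b j) :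
    ∃ C : ℝ, ∀ N : ℕ, 2 ≤ N → Rsum N k a b ≤ C * (Real.log N) ^ k / N := by
  classical
  obtain ⟨i0, j0, hij, hai0, hbj0⟩ := h
  have hij' : i0 ≠ j0 := ne_of_lt hij
  refine ⟨(6:ℝ)^k, fun N hN => ?_⟩
  have hNR : (2:ℝ) ≤ N := by exact_mod_cast hN
  have hN0 : (0:ℝ) < N := by linarith
  have hlog : 0 < Real.log N := Real.log_pos (by linarith)
  set F : Fin k → Fin N → ℝ := fun i m =>
    if i = j0 then 1/((N:ℝ)-m) + 1/(m:ℝ)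
    else if 1 ≤ a i then 1/((N:ℝ)-m) else 1/(m:ℝ) with hFdef
  have hxpos : ∀ m : Fin N, 0 < (N:ℝ) - m := by
    intro m
    have h1 : ((m:ℕ):ℝ) < N := by exact_mod_cast m.isLt
    linarith
  have hFnn : ∀ i m, 0 ≤ F i m := by
    intro i m
    have h1 : 0 ≤ 1/((N:ℝ)-m) := le_of_lt (by have := hxpos m; positivity)
    have h2 : 0 ≤ 1/((m:ℕ):ℝ) := by positivity
    simp only [hFdef]
    split_ifs <;> [linarith; exact h1; exact h2]
  -- key pointwise bound
  have key : ∀ n : Fin k → Fin N, (∀ i, 0 < (n i : ℕ)) → StrictMono n →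
      ∏ i, 1 / (((N : ℝ) - n i) ^ a i * (n i : ℝ) ^ b i)
        ≤ (1/(N:ℝ)) * ∏ i, F i (n i) := by
    intro n hpos hmono
    set x : Fin k → ℝ := fun i => (N:ℝ) - n i with hxdef
    set y : Fin k → ℝ := fun i => ((n i : ℕ) : ℝ) with hydef
    have hy1 : ∀ i, (1:ℝ) ≤ y i := by
      intro i; simp only [hydef]; exact_mod_cast hpos i
    have hx1 : ∀ i, (1:ℝ) ≤ x i := by
      intro i
      have h1 : (n i : ℕ) + 1 ≤ N := (n i).isLt
      have h2 : ((n i : ℕ):ℝ) + 1 ≤ N := by exact_mod_cast h1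
      simp only [hxdef]; linarith
    have hx0 : ∀ i, (0:ℝ) < x i := fun i => lt_of_lt_of_le one_pos (hx1 i)
    have hy0 : ∀ i, (0:ℝ) < y i := fun i => lt_of_lt_of_le one_pos (hy1 i)
    set ψ : Fin k → ℝ := fun i => if i = j0 then 1/(y i) else if 1 ≤ a i then 1/(x i) else 1/(y i)
      with hψdef
    have hψnn : ∀ i, 0 ≤ ψ i := by
      intro i
      have := hx0 i; have := hy0 i
      simp only [hψdef]; split_ifs <;> positivity
    have hψ_eq_F : ∀ i, i ≠ j0 → ψ i = F i (n i) := by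
      intro i hi; simp only [hψdef, hFdef, hxdef, hydef, if_neg hi]
    have hψi0 : ψ i0 = 1/(x i0) := by
      simp only [hψdef, if_neg hij', if_pos (le_trans one_le_two hai0)]
    -- step 1 : pointwise product bound
    have step1 : ∏ i, 1 / ((x i) ^ a i * (y i) ^ b i)
        ≤ ∏ i, Function.update ψ i0 (1/(x i0) * ψ i0) i := by
      apply Finset.prod_le_prod
      · intro i _
        have := hx0 i; have := hy0 i; positivity
      · intro i _
        by_cases hii : i = i0
        · subst hii
          rw [Function.update_self, hψi0]
          calc 1 / ((x i) ^ a i * (y i) ^ b i) ≤ 1 / ((x i)^2 * (y i)^0) :=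
                pow_bound (hx1 i) (hy1 i) hai0 (Nat.zero_le _)
            _ = 1/(x i) * (1/(x i)) := by rw [pow_zero, mul_one, sq, one_div_mul_one_div]
        · rw [Function.update_of_ne hii]
          by_cases hij0 : i = j0
          · subst hij0
            have : ψ i = 1/(y i) := by simp only [hψdef, if_pos rfl]
            rw [this]
            calc 1 / ((x i) ^ a i * (y i) ^ b i) ≤ 1 / ((x i)^0 * (y i)^1) :=
                  pow_bound (hx1 i) (hy1 i) (Nat.zero_le _) hbj0
              _ = 1/(y i) := by rw [pow_zero, one_mul, pow_one]
          · by_cases hai : 1 ≤ a i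
            · have : ψ i = 1/(x i) := by simp only [hψdef, if_neg hij0, if_pos hai]
              rw [this]
              calc 1 / ((x i) ^ a i * (y i) ^ b i) ≤ 1 / ((x i)^1 * (y i)^0) :=
                    pow_bound (hx1 i) (hy1 i) hai (Nat.zero_le _)
                _ = 1/(x i) := by rw [pow_zero, mul_one, pow_one]
            · have hbi : 1 ≤ b i := by have := hab i; omega
              have : ψ i = 1/(y i) := by simp only [hψdef, if_neg hij0, if_neg hai]
              rw [this]
              calc 1 / ((x i) ^ a i * (y i) ^ b i) ≤ 1 / ((x i)^0 * (y i)^1) :=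
                    pow_bound (hx1 i) (hy1 i) (Nat.zero_le _) hbi
                _ = 1/(y i) := by rw [pow_zero, one_mul, pow_one]
    -- step 2 : extract the extra factor
    have step2 : ∏ i, Function.update ψ i0 (1/(x i0) * ψ i0) i = (1/(x i0)) * ∏ i, ψ i := by
      rw [Finset.prod_update_of_mem (Finset.mem_univ i0), Finset.sdiff_singleton_eq_erase,
        mul_assoc, Finset.mul_prod_erase Finset.univ ψ (Finset.mem_univ i0)]
    -- step 3 : 1/x i0 ≤ 1/x j0
    have hmono' : (n i0 : ℕ) < (n j0 : ℕ) := hmono hij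
    have hxle : x j0 ≤ x i0 := by
      have : ((n i0 : ℕ):ℝ) ≤ ((n j0 : ℕ):ℝ) := by exact_mod_cast le_of_lt hmono'
      simp only [hxdef]; linarith
    have step3 : (1/(x i0)) * ∏ i, ψ i ≤ (1/(x j0)) * ∏ i, ψ i := by
      apply mul_le_mul_of_nonneg_right (one_div_le_one_div_of_le (hx0 j0) hxle)
      exact Finset.prod_nonneg fun i _ => hψnn i
    -- step 4 : the splitting identity at j0
    have hxy : x j0 + y j0 = N := by simp only [hxdef, hydef]; ring
    have hsplit : (1/(x j0)) * (1/(y j0)) = (1/(N:ℝ)) * (1/(x j0) + 1/(y j0)) := by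
      have h1 : x j0 ≠ 0 := ne_of_gt (hx0 j0)
      have h2 : y j0 ≠ 0 := ne_of_gt (hy0 j0)
      have h3 : (N:ℝ) ≠ 0 := ne_of_gt hN0
      field_simp
      linarith [hxy]
    have hψj0 : ψ j0 = 1/(y j0) := by simp only [hψdef, if_pos rfl]
    have hFj0 : F j0 (n j0) = 1/(x j0) + 1/(y j0) := by
      simp only [hFdef, hxdef, hydef, if_pos rfl]
    have step4 : (1/(x j0)) * ∏ i, ψ i = (1/(N:ℝ)) * ∏ i, F i (n i) := by
      rw [← Finset.mul_prod_erase Finset.univ ψ (Finset.mem_univ j0),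
          ← Finset.mul_prod_erase Finset.univ (fun i => F i (n i)) (Finset.mem_univ j0)]
      have hrest : ∏ i ∈ Finset.univ.erase j0, ψ i
          = ∏ i ∈ Finset.univ.erase j0, F i (n i) := by
        apply Finset.prod_congr rfl
        intro i hi
        exact hψ_eq_F i (Finset.ne_of_mem_erase hi)
      rw [hrest, hψj0, hFj0, ← mul_assoc, ← mul_assoc, hsplit]
    calc ∏ i, 1 / (((N : ℝ) - n i) ^ a i * (n i : ℝ) ^ b i)
        = ∏ i, 1 / ((x i) ^ a i * (y i) ^ b i) := rfl
      _ ≤ ∏ i, Function.update ψ i0 (1/(x i0) * ψ i0) i := step1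
      _ = (1/(x i0)) * ∏ i, ψ i := step2
      _ ≤ (1/(x j0)) * ∏ i, ψ i := step3
      _ = (1/(N:ℝ)) * ∏ i, F i (n i) := step4
  -- coordinate sums
  have hcoord : ∀ i : Fin k, ∑ m : Fin N, F i m ≤ 6 * Real.log N := by
    intro i
    have hA := sumA N hN
    have hB := sumB N hN
    by_cases hi : i = j0
    · subst hi
      have : ∑ m : Fin N, F i m = (∑ m : Fin N, 1/((N:ℝ)-m)) + ∑ m : Fin N, 1/((m:ℕ):ℝ) := by
        simp only [hFdef, if_pos rfl]
        rw [Finset.sum_add_distrib]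
      rw [this]; linarith
    · by_cases hai : 1 ≤ a i
      · have : ∑ m : Fin N, F i m = ∑ m : Fin N, 1/((N:ℝ)-m) := by
          simp only [hFdef, if_neg hi, if_pos hai]
        rw [this]; linarith
      · have : ∑ m : Fin N, F i m = ∑ m : Fin N, 1/((m:ℕ):ℝ) := by
          simp only [hFdef, if_neg hi, if_neg hai]
        rw [this]; linarith
  unfold Rsum
  calc ∑ n ∈ Finset.univ.filter
        (fun n : Fin k → Fin N => (∀ i, 0 < (n i : ℕ)) ∧ StrictMono n),
        ∏ i, 1 / (((N : ℝ) - n i) ^ a i * (n i : ℝ) ^ b i)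
      ≤ ∑ n ∈ Finset.univ.filter
        (fun n : Fin k → Fin N => (∀ i, 0 < (n i : ℕ)) ∧ StrictMono n),
        (1/(N:ℝ)) * ∏ i, F i (n i) := by
        apply Finset.sum_le_sum
        intro n hn
        rw [Finset.mem_filter] at hn
        exact key n hn.2.1 hn.2.2
    _ = (1/(N:ℝ)) * ∑ n ∈ Finset.univ.filter
        (fun n : Fin k → Fin N => (∀ i, 0 < (n i : ℕ)) ∧ StrictMono n),
        ∏ i, F i (n i) := by rw [Finset.mul_sum]
    _ ≤ (1/(N:ℝ)) * ∑ n : Fin k → Fin N, ∏ i, F i (n i) := by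
        apply mul_le_mul_of_nonneg_left _ (by positivity)
        apply Finset.sum_le_sum_of_subset_of_nonneg (Finset.filter_subset _ _)
        intro n _ _
        exact Finset.prod_nonneg fun i _ => hFnn i (n i)
    _ = (1/(N:ℝ)) * ∏ i : Fin k, ∑ m : Fin N, F i m := by
        rw [Finset.prod_univ_sum, Fintype.piFinset_univ]
    _ ≤ (1/(N:ℝ)) * ∏ _i : Fin k, (6 * Real.log N) := by
        apply mul_le_mul_of_nonneg_left _ (by positivity)
        apply Finset.prod_le_prod
        · intro i _; exact Finset.sum_nonneg fun m _ => hFnn i m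
        · intro i _; exact hcoord i
    _ = (6:ℝ)^k * (Real.log N)^k / N := by
        rw [Finset.prod_const, Finset.card_univ, Fintype.card_fin, mul_pow]
        ring
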